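/- Let T_1, T_2 be π-increasing trees with disjoint vertex sets, with maximum vertices m_1 and m_2, both irreducible, and v_2 a vertex of T_2 with v_2 < m_1 < m_2. Then T = splice(T_1, m_1; T_2, v_2) is irreducible, i.e., the m_2-dependence graph of T is connected. -/
import Mathlib


open scoped Classical

/-- An unordered increasing tree on a finite set of positive integers,
given by its vertex set and parent function: the root is the minimum vertex
and is fixed by `parent`, and every nonroot vertex has a parent in the tree
with strictly smaller label (so labels increase away from the root). -/
structure ITree : Type where
  verts : Finset ℕ
  parent : ℕ → ℕ
  pos : ∀ v ∈ verts, 0 < v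
  parent_root : ∀ v ∈ verts, (∀ u ∈ verts, v ≤ u) → parent v = v
  parent_lt : ∀ v ∈ verts, ¬(∀ u ∈ verts, v ≤ u) → parent v ∈ verts ∧ parent v < v

/-- `a` is an ancestor of `v` in `T` (this includes `a = v`): some iterate of
the parent function sends `v` to `a`. -/
def Ancestor (T : ITree) (a v : ℕ) : Prop := ∃ k : ℕ, T.parent^[k] v = a

/-- The chain from the root of `T` to `v`: the set of ancestors of `v`. -/
noncomputable def chain (T : ITree) (v : ℕ) : Finset ℕ :=
  T.verts.filter (fun a => Ancestor T a v)

/-- The number of sons of the vertex `i` in `T`. -/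
noncomputable def sons (T : ITree) (i : ℕ) : ℕ :=
  (T.verts.filter (fun v => v ≠ i ∧ T.parent v = i)).card

/-- `R = splice(T₁, v₁; T₂, v₂)`: the increasing tree on the union of the
vertex sets obtained by merging the chain from the root of `T₁` to `v₁` with
the chain from the root of `T₂` to `v₂` into a single increasing chain
(each chain vertex having as parent its predecessor in the merged chain),
all other vertices keeping their parent.  This is exactly the interleaving of
the `v₁`-decomposition of `T₁` and the `v₂`-decomposition of `T₂` so that the
roots along the resulting chain increase. -/
def IsSplice (T₁ : ITree) (v₁ : ℕ) (T₂ : ITree) (v₂ : ℕ) (R : ITree) : Prop :=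
  R.verts = T₁.verts ∪ T₂.verts ∧
  (∀ w ∈ T₁.verts, w ∉ chain T₁ v₁ ∪ chain T₂ v₂ → R.parent w = T₁.parent w) ∧
  (∀ w ∈ T₂.verts, w ∉ chain T₁ v₁ ∪ chain T₂ v₂ → R.parent w = T₂.parent w) ∧
  (∀ w ∈ chain T₁ v₁ ∪ chain T₂ v₂,
    ∀ h : ((chain T₁ v₁ ∪ chain T₂ v₂).filter (· < w)).Nonempty,
      R.parent w = ((chain T₁ v₁ ∪ chain T₂ v₂).filter (· < w)).max' h)

/-- `π` is a set partition of a set of positive integers: its blocks are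
nonempty, consist of positive integers, and are pairwise disjoint. -/
def IsPartition (π : Finset (Finset ℕ)) : Prop :=
  (∀ B ∈ π, B.Nonempty) ∧ (∀ B ∈ π, ∀ b ∈ B, 0 < b) ∧
    (∀ B ∈ π, ∀ B' ∈ π, B ≠ B' → Disjoint B B')

/-- `T` is a `π`-increasing tree: its vertex set is a union of blocks of `π`,
and every block contained in the vertex set forms a chain of ancestors in `T`
(for `i < j` in the same block, `i` is an ancestor of `j`). -/
def PiIncreasing (π : Finset (Finset ℕ)) (T : ITree) : Prop :=
  (∀ v ∈ T.verts, ∃ B ∈ π, v ∈ B ∧ B ⊆ T.verts) ∧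
  (∀ B ∈ π, B ⊆ T.verts → ∀ i ∈ B, ∀ j ∈ B, i ≤ j → Ancestor T i j)

/-- The edge relation of the `v`-dependence graph `G_v(T)` (on the blocks of
`π` contained in `V(T)`): there is an edge from `B` to `B'` when the maximum
`μ` of `B` does not lie on the chain from the root of `T` to `v`, and the
piece of the `v`-decomposition of `T` containing `μ` (as a nonroot vertex) is
rooted at a vertex `a ∈ B'`; the root `a` of that piece is the largest
ancestor of `v` which is also an ancestor of `μ`. -/
def DepEdge (π : Finset (Finset ℕ)) (T : ITree) (v : ℕ) (B B' : Finset ℕ) : Prop :=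
  B ∈ π ∧ B' ∈ π ∧ B ⊆ T.verts ∧ B' ⊆ T.verts ∧
  ∃ hB : B.Nonempty, ¬ Ancestor T (B.max' hB) v ∧
    ∃ a ∈ B', Ancestor T a v ∧ Ancestor T a (B.max' hB) ∧
      ∀ w, Ancestor T w v → Ancestor T w (B.max' hB) → w ≤ a

/-- The `v`-dependence graph `G_v(T)` is connected: any two blocks of `π`
contained in `V(T)` are related by the equivalence closure of the edge
relation. -/
def DepConnected (π : Finset (Finset ℕ)) (T : ITree) (v : ℕ) : Prop :=
  ∀ B ∈ π, B ⊆ T.verts → ∀ B' ∈ π, B' ⊆ T.verts →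
    Relation.EqvGen (DepEdge π T v) B B'

lemma ancestor_refl (T : ITree) (v : ℕ) : Ancestor T v v := ⟨0, rfl⟩

lemma ancestor_step (T : ITree) (v : ℕ) : Ancestor T (T.parent v) v :=
  ⟨1, Function.iterate_one T.parent ▸ rfl⟩

lemma ancestor_trans {T : ITree} {a b c : ℕ} (h1 : Ancestor T a b) (h2 : Ancestor T b c) :
    Ancestor T a c := by
  obtain ⟨k, hk⟩ := h1; obtain ⟨j, hj⟩ := h2
  exact ⟨k + j, by rw [Function.iterate_add_apply, hj, hk]⟩

lemma iterate_mem_le (T : ITree) {v : ℕ} (hv : v ∈ T.verts) (k : ℕ) :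
    T.parent^[k] v ∈ T.verts ∧ T.parent^[k] v ≤ v := by
  induction k with
  | zero => exact ⟨hv, le_refl v⟩
  | succ k ih =>
    obtain ⟨hm, hle⟩ := ih
    rw [Function.iterate_succ_apply']
    by_cases h : ∀ u ∈ T.verts, T.parent^[k] v ≤ u
    · rw [T.parent_root _ hm h]; exact ⟨hm, hle⟩
    · obtain ⟨h1, h2⟩ := T.parent_lt _ hm h
      exact ⟨h1, le_trans h2.le hle⟩

lemma ancestor_mem {T : ITree} {a v : ℕ} (hv : v ∈ T.verts) (h : Ancestor T a v) :
    a ∈ T.verts := by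
  obtain ⟨k, hk⟩ := h; exact hk ▸ (iterate_mem_le T hv k).1

lemma ancestor_le {T : ITree} {a v : ℕ} (hv : v ∈ T.verts) (h : Ancestor T a v) :
    a ≤ v := by
  obtain ⟨k, hk⟩ := h; exact hk ▸ (iterate_mem_le T hv k).2

lemma ancestor_linear {T : ITree} {a b v : ℕ} (hv : v ∈ T.verts) (ha : Ancestor T a v)
    (hb : Ancestor T b v) (hab : a ≤ b) : Ancestor T a b := by
  obtain ⟨k, hk⟩ := ha; obtain ⟨j, hj⟩ := hb
  rcases le_total j k with h | h
  · exact ⟨k - j, by rw [← hj, ← Function.iterate_add_apply, Nat.sub_add_cancel h, hk]⟩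
  · have hba : Ancestor T b a :=
      ⟨j - k, by rw [← hk, ← Function.iterate_add_apply, Nat.sub_add_cancel h, hj]⟩
    have hamem : a ∈ T.verts := ancestor_mem hv ⟨k, hk⟩
    have : b ≤ a := ancestor_le hamem hba
    obtain rfl : a = b := le_antisymm hab this
    exact ancestor_refl T a

lemma mem_chain_iff {T : ITree} {v x : ℕ} (hv : v ∈ T.verts) :
    x ∈ chain T v ↔ Ancestor T x v := by
  simp only [chain, Finset.mem_filter]
  exact ⟨fun h => h.2, fun h => ⟨ancestor_mem hv h, h⟩⟩

lemma low_ancestor (T : ITree) : ∀ y, y ∈ T.verts → ∀ r ∈ T.verts,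
    (∀ u ∈ T.verts, r ≤ u) → Ancestor T r y := by
  intro y
  induction y using Nat.strong_induction_on with
  | _ y ih =>
    intro hy r hr hlb
    by_cases hroot : ∀ u ∈ T.verts, y ≤ u
    · obtain rfl : r = y := le_antisymm (hlb y hy) (hroot r hr)
      exact ancestor_refl T r
    · obtain ⟨hpm, hpl⟩ := T.parent_lt y hy hroot
      exact ancestor_trans (ih _ hpl hpm r hr hlb) (ancestor_step T y)

/-- Generic induction principle along ancestry. -/
lemma ancestor_ind (T : ITree) (P : ℕ → ℕ → Prop)
    (base : ∀ y, P y y)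
    (step : ∀ y ∈ T.verts, ¬(∀ u ∈ T.verts, y ≤ u) → ∀ x, P (T.parent y) x → P y x) :
    ∀ y ∈ T.verts, ∀ x, Ancestor T x y → P y x := by
  intro y
  induction y using Nat.strong_induction_on with
  | _ y ih =>
    rintro hy x ⟨k, hk⟩
    induction k generalizing x with
    | zero => exact hk ▸ base y
    | succ k ihk =>
      by_cases hroot : ∀ u ∈ T.verts, y ≤ u
      · rw [Function.iterate_succ_apply, T.parent_root y hy hroot] at hk
        exact ihk x hk
      · obtain ⟨hpmem, hplt⟩ := T.parent_lt y hy hroot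
        rw [Function.iterate_succ_apply] at hk
        exact step y hy hroot x (ih _ hplt hpmem x ⟨k, hk⟩)

/-- **Lemma 3.5(b) of Féray–Goulden–Lascoux.**  Let `T₁`, `T₂` be irreducible
`π`-increasing trees with disjoint vertex sets and maximum vertices `m₁`,
`m₂`, and let `v₂` be a vertex of `T₂` with `v₂ < m₁ < m₂`.  Then
`T = splice(T₁, m₁; T₂, v₂)` is irreducible: its `m₂`-dependence graph is
connected (`m₂` being the maximum vertex of `T`). -/
theorem splice_irreducible (π : Finset (Finset ℕ)) (T₁ T₂ T : ITree) (m₁ m₂ v₂ : ℕ)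
    (hπ : IsPartition π) (h₁ : PiIncreasing π T₁) (h₂ : PiIncreasing π T₂)
    (hdisj : Disjoint T₁.verts T₂.verts)
    (hm₁ : m₁ ∈ T₁.verts) (hm₁max : ∀ u ∈ T₁.verts, u ≤ m₁)
    (hm₂ : m₂ ∈ T₂.verts) (hm₂max : ∀ u ∈ T₂.verts, u ≤ m₂)
    (hirr₁ : DepConnected π T₁ m₁) (hirr₂ : DepConnected π T₂ m₂)
    (hv₂ : v₂ ∈ T₂.verts) (hv₂lt : v₂ < m₁) (hm : m₁ < m₂)
    (hspl : IsSplice T₁ m₁ T₂ v₂ T) :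
    DepConnected π T m₂ := by
  obtain ⟨hT, hP₁, hP₂, hPC⟩ := hspl
  set C : Finset ℕ := chain T₁ m₁ ∪ chain T₂ v₂ with hCdef
  have hsub₁ : T₁.verts ⊆ T.verts := by rw [hT]; exact Finset.subset_union_left
  have hsub₂ : T₂.verts ⊆ T.verts := by rw [hT]; exact Finset.subset_union_right
  have hdis : ∀ {x : ℕ}, x ∈ T₁.verts → x ∈ T₂.verts → False :=
    fun h1 h2 => Finset.disjoint_left.1 hdisj h1 h2
  have hC₁in : ∀ {x : ℕ}, Ancestor T₁ x m₁ → x ∈ C :=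
    fun h => Finset.mem_union_left _ ((mem_chain_iff hm₁).2 h)
  have hC₂in : ∀ {x : ℕ}, Ancestor T₂ x v₂ → x ∈ C :=
    fun h => Finset.mem_union_right _ ((mem_chain_iff hv₂).2 h)
  have hCsplit : ∀ {x : ℕ}, x ∈ C →
      (Ancestor T₁ x m₁ ∧ x ∈ T₁.verts) ∨ (Ancestor T₂ x v₂ ∧ x ∈ T₂.verts) := by
    intro x hx
    rcases Finset.mem_union.1 hx with h | h
    · exact Or.inl ⟨(mem_chain_iff hm₁).1 h, ancestor_mem hm₁ ((mem_chain_iff hm₁).1 h)⟩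
    · exact Or.inr ⟨(mem_chain_iff hv₂).1 h, ancestor_mem hv₂ ((mem_chain_iff hv₂).1 h)⟩
  have hCof₁ : ∀ {x : ℕ}, x ∈ C → x ∈ T₁.verts → Ancestor T₁ x m₁ := by
    intro x hx hx1
    rcases hCsplit hx with ⟨h, _⟩ | ⟨_, h2⟩
    · exact h
    · exact (hdis hx1 h2).elim
  have hCof₂ : ∀ {x : ℕ}, x ∈ C → x ∈ T₂.verts → Ancestor T₂ x v₂ := by
    intro x hx hx2
    rcases hCsplit hx with ⟨_, h1⟩ | ⟨h, _⟩
    · exact (hdis h1 hx2).elim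
    · exact h
  -- (M): any two comparable elements of the merged chain are related by T-ancestry
  have M : ∀ y ∈ C, ∀ c ∈ C, c ≤ y → Ancestor T c y := by
    intro y
    induction y using Nat.strong_induction_on with
    | _ y ih =>
      intro hyC c hcC hcy
      rcases eq_or_lt_of_le hcy with rfl | hlt
      · exact ancestor_refl T c
      · have hne : (C.filter (· < y)).Nonempty := ⟨c, Finset.mem_filter.2 ⟨hcC, hlt⟩⟩
        have hp : T.parent y = (C.filter (· < y)).max' hne := hPC y hyC hne
        have hqmem := Finset.mem_filter.1 ((C.filter (· < y)).max'_mem hne)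
        have h1 : Ancestor T c ((C.filter (· < y)).max' hne) :=
          ih _ hqmem.2 hqmem.1 c hcC (Finset.le_max' (C.filter (· < y)) c (Finset.mem_filter.2 ⟨hcC, hlt⟩))
        exact ancestor_trans h1 (hp ▸ ancestor_step T y)
  -- (L1): T₁-ancestry transfers to T
  have L1 : ∀ y ∈ T₁.verts, ∀ x, Ancestor T₁ x y → Ancestor T x y := by
    refine ancestor_ind T₁ (fun y x => Ancestor T x y) (fun y => ancestor_refl T y) ?_
    intro y hy hroot x hx
    refine ancestor_trans hx ?_
    by_cases hyC : y ∈ C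
    · have hym : Ancestor T₁ y m₁ := hCof₁ hyC hy
      have hpC : T₁.parent y ∈ C := hC₁in (ancestor_trans (ancestor_step T₁ y) hym)
      exact M y hyC _ hpC (T₁.parent_lt y hy hroot).2.le
    · exact (hP₁ y hy hyC) ▸ ancestor_step T y
  have L2 : ∀ y ∈ T₂.verts, ∀ x, Ancestor T₂ x y → Ancestor T x y := by
    refine ancestor_ind T₂ (fun y x => Ancestor T x y) (fun y => ancestor_refl T y) ?_
    intro y hy hroot x hx
    refine ancestor_trans hx ?_
    by_cases hyC : y ∈ C
    · have hym : Ancestor T₂ y v₂ := hCof₂ hyC hy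
      have hpC : T₂.parent y ∈ C := hC₂in (ancestor_trans (ancestor_step T₂ y) hym)
      exact M y hyC _ hpC (T₂.parent_lt y hy hroot).2.le
    · exact (hP₂ y hy hyC) ▸ ancestor_step T y
  -- a* : the highest common T₂-ancestor of m₂ and v₂
  have hr₂ne : T₂.verts.Nonempty := ⟨v₂, hv₂⟩
  have hrlb : ∀ u ∈ T₂.verts, T₂.verts.min' hr₂ne ≤ u := fun u hu => Finset.min'_le _ u hu
  have hSne : (chain T₂ m₂ ∩ chain T₂ v₂).Nonempty := by
    refine ⟨T₂.verts.min' hr₂ne, Finset.mem_inter.2 ⟨(mem_chain_iff hm₂).2 ?_, (mem_chain_iff hv₂).2 ?_⟩⟩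
    · exact low_ancestor T₂ m₂ hm₂ _ (Finset.min'_mem _ _) hrlb
    · exact low_ancestor T₂ v₂ hv₂ _ (Finset.min'_mem _ _) hrlb
  set astar : ℕ := (chain T₂ m₂ ∩ chain T₂ v₂).max' hSne with hastar
  have hamem := Finset.mem_inter.1 ((chain T₂ m₂ ∩ chain T₂ v₂).max'_mem hSne)
  have ha1 : Ancestor T₂ astar m₂ := (mem_chain_iff hm₂).1 hamem.1
  have ha2 : Ancestor T₂ astar v₂ := (mem_chain_iff hv₂).1 hamem.2
  have hamax : ∀ c, Ancestor T₂ c m₂ → Ancestor T₂ c v₂ → c ≤ astar := fun c h1 h2 =>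
    Finset.le_max' _ _ (Finset.mem_inter.2 ⟨(mem_chain_iff hm₂).2 h1, (mem_chain_iff hv₂).2 h2⟩)
  have haT₂ : astar ∈ T₂.verts := ancestor_mem hm₂ ha1
  have haC : astar ∈ C := hC₂in ha2
  have hav₂ : astar ≤ v₂ := ancestor_le hv₂ ha2
  have hATam₂ : Ancestor T astar m₂ := L2 m₂ hm₂ astar ha1
  -- main description of T-ancestry
  have main : ∀ y ∈ T.verts, ∀ x, Ancestor T x y →
      ((y ∈ T₁.verts → Ancestor T₁ x y ∨ (x ∈ C ∧ ∃ c ∈ C, Ancestor T₁ c y ∧ x ≤ c)) ∧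
       (y ∈ T₂.verts → Ancestor T₂ x y ∨ (x ∈ C ∧ ∃ c ∈ C, Ancestor T₂ c y ∧ x ≤ c))) := by
    refine ancestor_ind T
      (fun y x => ((y ∈ T₁.verts → Ancestor T₁ x y ∨ (x ∈ C ∧ ∃ c ∈ C, Ancestor T₁ c y ∧ x ≤ c)) ∧
       (y ∈ T₂.verts → Ancestor T₂ x y ∨ (x ∈ C ∧ ∃ c ∈ C, Ancestor T₂ c y ∧ x ≤ c))))
      (fun y => ⟨fun _ => Or.inl (ancestor_refl T₁ y), fun _ => Or.inl (ancestor_refl T₂ y)⟩) ?_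
    intro y hy hroot x hx
    have hne : y ∈ C → (C.filter (· < y)).Nonempty := by
      intro _
      push_neg at hroot
      obtain ⟨u, hu, hlt⟩ := hroot
      rw [hT] at hu
      rcases Finset.mem_union.1 hu with hu1 | hu2
      · have h1 : T₁.verts.min' ⟨u, hu1⟩ ∈ C :=
          hC₁in (low_ancestor T₁ m₁ hm₁ _ (Finset.min'_mem _ _) (fun w hw => Finset.min'_le _ w hw))
        exact ⟨_, Finset.mem_filter.2 ⟨h1, lt_of_le_of_lt (Finset.min'_le _ u hu1) hlt⟩⟩
      · have h1 : T₂.verts.min' ⟨u, hu2⟩ ∈ C :=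
          hC₂in (low_ancestor T₂ v₂ hv₂ _ (Finset.min'_mem _ _) (fun w hw => Finset.min'_le _ w hw))
        exact ⟨_, Finset.mem_filter.2 ⟨h1, lt_of_le_of_lt (Finset.min'_le _ u hu2) hlt⟩⟩
    rw [hT] at hy
    rcases Finset.mem_union.1 hy with hy₁ | hy₂
    · -- y ∈ T₁.verts
      constructor
      · intro _
        by_cases hyC : y ∈ C
        · have hym₁ : Ancestor T₁ y m₁ := hCof₁ hyC hy₁
          have hne' := hne hyC
          have hpe : T.parent y = (C.filter (· < y)).max' hne' := hPC y hyC hne'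
          rw [hpe] at hx
          have hqmem := Finset.mem_filter.1 ((C.filter (· < y)).max'_mem hne')
          set q := (C.filter (· < y)).max' hne' with hq
          have hqC : q ∈ C := hqmem.1
          have hqlt : q < y := hqmem.2
          rcases hCsplit hqC with ⟨hqm₁, hqT₁⟩ | ⟨hqv₂, hqT₂⟩
          · have hqy : Ancestor T₁ q y := ancestor_linear hm₁ hqm₁ hym₁ hqlt.le
            rcases hx.1 hqT₁ with h | ⟨hxC, c, hcC, hcq, hxc⟩
            · exact Or.inl (ancestor_trans h hqy)
            · exact Or.inr ⟨hxC, c, hcC, ancestor_trans hcq hqy, hxc⟩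
          · rcases hx.2 hqT₂ with h | ⟨hxC, c', hc'C, hc'q, hxc'⟩
            · exact Or.inr ⟨hC₂in (ancestor_trans h hqv₂), y, hyC, ancestor_refl T₁ y,
                le_trans (ancestor_le hqT₂ h) hqlt.le⟩
            · exact Or.inr ⟨hxC, y, hyC, ancestor_refl T₁ y,
                le_trans hxc' (le_trans (ancestor_le hqT₂ hc'q) hqlt.le)⟩
        · have hroot₁ : ¬(∀ u ∈ T₁.verts, y ≤ u) := fun hlb =>
            hyC (hC₁in (low_ancestor T₁ m₁ hm₁ y hy₁ hlb))
          have hpe : T.parent y = T₁.parent y := hP₁ y hy₁ hyC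
          rw [hpe] at hx
          have hpm := (T₁.parent_lt y hy₁ hroot₁).1
          have hpy : Ancestor T₁ (T₁.parent y) y := ancestor_step T₁ y
          rcases hx.1 hpm with h | ⟨hxC, c, hcC, hcp, hxc⟩
          · exact Or.inl (ancestor_trans h hpy)
          · exact Or.inr ⟨hxC, c, hcC, ancestor_trans hcp hpy, hxc⟩
      · intro hy₂'; exact (hdis hy₁ hy₂').elim
    · -- y ∈ T₂.verts
      constructor
      · intro hy₁'; exact (hdis hy₁' hy₂).elim
      · intro _
        by_cases hyC : y ∈ C
        · have hyv₂ : Ancestor T₂ y v₂ := hCof₂ hyC hy₂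
          have hne' := hne hyC
          have hpe : T.parent y = (C.filter (· < y)).max' hne' := hPC y hyC hne'
          rw [hpe] at hx
          have hqmem := Finset.mem_filter.1 ((C.filter (· < y)).max'_mem hne')
          set q := (C.filter (· < y)).max' hne' with hq
          have hqC : q ∈ C := hqmem.1
          have hqlt : q < y := hqmem.2
          rcases hCsplit hqC with ⟨hqm₁, hqT₁⟩ | ⟨hqv₂, hqT₂⟩
          · rcases hx.1 hqT₁ with h | ⟨hxC, c', hc'C, hc'q, hxc'⟩
            · exact Or.inr ⟨hC₁in (ancestor_trans h hqm₁), y, hyC, ancestor_refl T₂ y,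
                le_trans (ancestor_le hqT₁ h) hqlt.le⟩
            · exact Or.inr ⟨hxC, y, hyC, ancestor_refl T₂ y,
                le_trans hxc' (le_trans (ancestor_le hqT₁ hc'q) hqlt.le)⟩
          · have hqy : Ancestor T₂ q y := ancestor_linear hv₂ hqv₂ hyv₂ hqlt.le
            rcases hx.2 hqT₂ with h | ⟨hxC, c, hcC, hcq, hxc⟩
            · exact Or.inl (ancestor_trans h hqy)
            · exact Or.inr ⟨hxC, c, hcC, ancestor_trans hcq hqy, hxc⟩
        · have hroot₂ : ¬(∀ u ∈ T₂.verts, y ≤ u) := fun hlb =>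
            hyC (hC₂in (low_ancestor T₂ v₂ hv₂ y hy₂ hlb))
          have hpe : T.parent y = T₂.parent y := hP₂ y hy₂ hyC
          rw [hpe] at hx
          have hpm := (T₂.parent_lt y hy₂ hroot₂).1
          have hpy : Ancestor T₂ (T₂.parent y) y := ancestor_step T₂ y
          rcases hx.2 hpm with h | ⟨hxC, c, hcC, hcp, hxc⟩
          · exact Or.inl (ancestor_trans h hpy)
          · exact Or.inr ⟨hxC, c, hcC, ancestor_trans hcp hpy, hxc⟩
  -- consequences of the description
  have hancm₂ : ∀ μ, μ ∈ T₂.verts → Ancestor T μ m₂ → Ancestor T₂ μ m₂ := by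
    intro μ hμ h
    rcases (main m₂ (hsub₂ hm₂) μ h).2 hm₂ with h' | ⟨hμC, c', hc'C, hc'm₂, hμc'⟩
    · exact h'
    · have hμv₂ : Ancestor T₂ μ v₂ := hCof₂ hμC hμ
      have hc'v₂ : Ancestor T₂ c' v₂ := hCof₂ hc'C (ancestor_mem hm₂ hc'm₂)
      exact ancestor_trans (ancestor_linear hv₂ hμv₂ hc'v₂ hμc') hc'm₂
  have hub1 : ∀ μ, μ ∈ T₁.verts → ∀ w, Ancestor T w m₂ → Ancestor T w μ → w ≤ astar := by
    intro μ hμ w hwm hwμ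
    rcases (main m₂ (hsub₂ hm₂) w hwm).2 hm₂ with h2 | ⟨hwC, c', hc'C, hc'm₂, hwc'⟩
    · have hwT₂ : w ∈ T₂.verts := ancestor_mem hm₂ h2
      rcases (main μ (hsub₁ hμ) w hwμ).1 hμ with h1 | ⟨hwC, _⟩
      · exact (hdis (ancestor_mem hμ h1) hwT₂).elim
      · exact hamax w h2 (hCof₂ hwC hwT₂)
    · exact le_trans hwc' (hamax c' hc'm₂ (hCof₂ hc'C (ancestor_mem hm₂ hc'm₂)))
  have hub2 : ∀ μ, μ ∈ T₁.verts → ∀ w, Ancestor T w m₂ → Ancestor T w μ →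
      ∃ c₀, Ancestor T₁ c₀ m₁ ∧ Ancestor T₁ c₀ μ ∧ w ≤ c₀ := by
    intro μ hμ w hwm hwμ
    rcases (main μ (hsub₁ hμ) w hwμ).1 hμ with h1 | ⟨hwC, c₀, hc₀C, hc₀μ, hwc₀⟩
    · have hwT₁ : w ∈ T₁.verts := ancestor_mem hμ h1
      rcases (main m₂ (hsub₂ hm₂) w hwm).2 hm₂ with h2 | ⟨hwC, _⟩
      · exact (hdis hwT₁ (ancestor_mem hm₂ h2)).elim
      · exact ⟨w, hCof₁ hwC hwT₁, h1, le_refl w⟩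
    · exact ⟨c₀, hCof₁ hc₀C (ancestor_mem hμ hc₀μ), hc₀μ, hwc₀⟩
  have hubT₂ : ∀ μ, μ ∈ T₂.verts → ∀ w, Ancestor T w m₂ → Ancestor T w μ →
      ∃ c₀, Ancestor T₂ c₀ m₂ ∧ Ancestor T₂ c₀ μ ∧ w ≤ c₀ := by
    intro μ hμ w hwm hwμ
    rcases (main μ (hsub₂ hμ) w hwμ).2 hμ with h1 | ⟨hwC, c, hcC, hcμ, hwc⟩
    · rcases (main m₂ (hsub₂ hm₂) w hwm).2 hm₂ with h2 | ⟨hwC, c', hc'C, hc'm₂, hwc'⟩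
      · exact ⟨w, h2, h1, le_refl w⟩
      · have hwT₂ : w ∈ T₂.verts := ancestor_mem hμ h1
        have hwv₂ : Ancestor T₂ w v₂ := hCof₂ hwC hwT₂
        have hc'v₂ : Ancestor T₂ c' v₂ := hCof₂ hc'C (ancestor_mem hm₂ hc'm₂)
        exact ⟨w, ancestor_trans (ancestor_linear hv₂ hwv₂ hc'v₂ hwc') hc'm₂, h1, le_refl w⟩
    · have hcv₂ : Ancestor T₂ c v₂ := hCof₂ hcC (ancestor_mem hμ hcμ)
      rcases (main m₂ (hsub₂ hm₂) w hwm).2 hm₂ with h2 | ⟨_, c', hc'C, hc'm₂, hwc'⟩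
      · have hwT₂ : w ∈ T₂.verts := ancestor_mem hm₂ h2
        have hwv₂ : Ancestor T₂ w v₂ := hCof₂ hwC hwT₂
        exact ⟨w, h2, ancestor_trans (ancestor_linear hv₂ hwv₂ hcv₂ hwc) hcμ, le_refl w⟩
      · have hc'v₂ : Ancestor T₂ c' v₂ := hCof₂ hc'C (ancestor_mem hm₂ hc'm₂)
        rcases le_total c c' with hcc | hcc
        · exact ⟨c, ancestor_trans (ancestor_linear hv₂ hcv₂ hc'v₂ hcc) hc'm₂, hcμ, hwc⟩
        · exact ⟨c', hc'm₂, ancestor_trans (ancestor_linear hv₂ hc'v₂ hcv₂ hcc) hcμ, hwc'⟩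
  have hnotancT₁ : ∀ μ, μ ∈ T₁.verts → ¬ Ancestor T₁ μ m₁ → ¬ Ancestor T μ m₂ := by
    intro μ hμ hno h
    rcases (main m₂ (hsub₂ hm₂) μ h).2 hm₂ with h2 | ⟨hμC, _⟩
    · exact hdis hμ (ancestor_mem hm₂ h2)
    · exact hno (hCof₁ hμC hμ)
  have hnotanc2 : ∀ μ, μ ∈ T₁.verts → astar < μ → ¬ Ancestor T μ m₂ := by
    intro μ hμ hgt h
    rcases (main m₂ (hsub₂ hm₂) μ h).2 hm₂ with h2 | ⟨hμC, c', hc'C, hc'm₂, hμc'⟩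
    · exact hdis hμ (ancestor_mem hm₂ h2)
    · have hc'le : c' ≤ astar := hamax c' hc'm₂ (hCof₂ hc'C (ancestor_mem hm₂ hc'm₂))
      exact absurd (le_trans hμc' hc'le) (not_le.2 hgt)
  -- block classification
  have hclass : ∀ B ∈ π, B ⊆ T.verts → B ⊆ T₁.verts ∨ B ⊆ T₂.verts := by
    intro B hB hBT
    obtain ⟨b, hb⟩ := hπ.1 B hB
    have hbT := hBT hb
    rw [hT] at hbT
    rcases Finset.mem_union.1 hbT with h | h
    · obtain ⟨B₀, hB₀π, hbB₀, hB₀sub⟩ := h₁.1 b h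
      left
      obtain rfl : B = B₀ := by
        by_contra hne'
        exact (Finset.disjoint_left.1 (hπ.2.2 B hB B₀ hB₀π hne')) hb hbB₀
      exact hB₀sub
    · obtain ⟨B₀, hB₀π, hbB₀, hB₀sub⟩ := h₂.1 b h
      right
      obtain rfl : B = B₀ := by
        by_contra hne'
        exact (Finset.disjoint_left.1 (hπ.2.2 B hB B₀ hB₀π hne')) hb hbB₀
      exact hB₀sub
  -- the block of a*
  obtain ⟨Bs, hBsπ, haBs, hBsT₂⟩ := h₂.1 astar haT₂
  -- transfer of T₂-edges
  have hEdge₂ : ∀ B B', DepEdge π T₂ m₂ B B' → DepEdge π T m₂ B B' := by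
    rintro B B' ⟨hBπ, hB'π, hBT, hB'T, hB, hno, a, haB', ham₂', haμ, hmax⟩
    have hμT₂ : B.max' hB ∈ T₂.verts := hBT (B.max'_mem hB)
    refine ⟨hBπ, hB'π, hBT.trans hsub₂, hB'T.trans hsub₂, hB,
      fun h => hno (hancm₂ _ hμT₂ h), a, haB', L2 m₂ hm₂ a ham₂', L2 _ hμT₂ a haμ, ?_⟩
    intro w hw1 hw2
    obtain ⟨c₀, hc1, hc2, hc3⟩ := hubT₂ _ hμT₂ w hw1 hw2
    exact le_trans hc3 (hmax c₀ hc1 hc2)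
  -- rerouted edges to Bs
  have hreroute : ∀ B ∈ π, B ⊆ T₁.verts → ∀ c ∈ B, Ancestor T₁ c m₁ → astar < c →
      DepEdge π T m₂ B Bs := by
    intro B hBπ hBT₁ c hcB hcm₁ hcgt
    have hBne : B.Nonempty := ⟨c, hcB⟩
    have hμB : B.max' hBne ∈ B := B.max'_mem hBne
    have hμT₁ : B.max' hBne ∈ T₁.verts := hBT₁ hμB
    have hcμle : c ≤ B.max' hBne := Finset.le_max' B c hcB
    have hcμ : Ancestor T₁ c (B.max' hBne) := h₁.2 B hBπ hBT₁ c hcB _ hμB hcμle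
    refine ⟨hBπ, hBsπ, hBT₁.trans hsub₁, hBsT₂.trans hsub₂, hBne,
      hnotanc2 _ hμT₁ (lt_of_lt_of_le hcgt hcμle), astar, haBs, hATam₂, ?_, ?_⟩
    · exact ancestor_trans (M c (hC₁in hcm₁) astar haC hcgt.le) (L1 _ hμT₁ c hcμ)
    · exact fun w hw1 hw2 => hub1 _ hμT₁ w hw1 hw2
  -- transfer of T₁-edges
  have htrans₁ : ∀ B B', DepEdge π T₁ m₁ B B' → Relation.EqvGen (DepEdge π T m₂) B B' := by
    rintro B B' ⟨hBπ, hB'π, hBT, hB'T, hB, hno, a, haB', ham₁', haμ, hmax⟩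
    have hμT₁ : B.max' hB ∈ T₁.verts := hBT (B.max'_mem hB)
    have haT₁ : a ∈ T₁.verts := ancestor_mem hm₁ ham₁'
    rcases lt_or_gt_of_ne (show a ≠ astar from fun h => hdis haT₁ (h ▸ haT₂)) with hlt | hgt
    · refine Relation.EqvGen.rel _ _ ⟨hBπ, hB'π, hBT.trans hsub₁, hB'T.trans hsub₁, hB,
        hnotancT₁ _ hμT₁ hno, a, haB',
        ancestor_trans (M astar haC a (hC₁in ham₁') hlt.le) hATam₂, L1 _ hμT₁ a haμ, ?_⟩
      intro w hw1 hw2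
      obtain ⟨c₀, hc1, hc2, hc3⟩ := hub2 _ hμT₁ w hw1 hw2
      exact le_trans hc3 (hmax c₀ hc1 hc2)
    · have he1 : DepEdge π T m₂ B Bs :=
        ⟨hBπ, hBsπ, hBT.trans hsub₁, hBsT₂.trans hsub₂, hB, hnotancT₁ _ hμT₁ hno, astar, haBs,
          hATam₂, ancestor_trans (M a (hC₁in ham₁') astar haC hgt.le) (L1 _ hμT₁ a haμ),
          fun w hw1 hw2 => hub1 _ hμT₁ w hw1 hw2⟩
      have he2 : DepEdge π T m₂ B' Bs := hreroute B' hB'π hB'T a haB' ham₁' hgt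
      exact Relation.EqvGen.trans _ _ _ (Relation.EqvGen.rel _ _ he1)
        (Relation.EqvGen.symm _ _ (Relation.EqvGen.rel _ _ he2))
  -- lifting equivalence closures
  have hlift : ∀ (r : Finset ℕ → Finset ℕ → Prop),
      (∀ X Y, r X Y → Relation.EqvGen (DepEdge π T m₂) X Y) →
      ∀ X Y, Relation.EqvGen r X Y → Relation.EqvGen (DepEdge π T m₂) X Y := by
    intro r hr X Y h
    induction h with
    | rel a b hab => exact hr a b hab
    | refl a => exact Relation.EqvGen.refl a
    | symm a b _ ih => exact Relation.EqvGen.symm a b ih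
    | trans a b c _ _ ih1 ih2 => exact Relation.EqvGen.trans a b c ih1 ih2
  -- the block of m₁
  obtain ⟨B₁, hB₁π, hmB₁, hB₁T₁⟩ := h₁.1 m₁ hm₁
  have hEB₁ : DepEdge π T m₂ B₁ Bs :=
    hreroute B₁ hB₁π hB₁T₁ m₁ hmB₁ (ancestor_refl T₁ m₁) (lt_of_le_of_lt hav₂ hv₂lt)
  have hconn₁ : ∀ B ∈ π, B ⊆ T₁.verts → Relation.EqvGen (DepEdge π T m₂) B Bs := by
    intro B hB hBT
    have h0 := hlift _ htrans₁ B B₁ (hirr₁ B hB hBT B₁ hB₁π hB₁T₁)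
    exact Relation.EqvGen.trans _ _ _ h0 (Relation.EqvGen.rel _ _ hEB₁)
  have hconn₂ : ∀ B ∈ π, B ⊆ T₂.verts → Relation.EqvGen (DepEdge π T m₂) B Bs := by
    intro B hB hBT
    exact hlift _ (fun X Y h => Relation.EqvGen.rel X Y (hEdge₂ X Y h)) B Bs
      (hirr₂ B hB hBT Bs hBsπ hBsT₂)
  intro B hBπ hBT B' hB'π hB'T
  have e1 : Relation.EqvGen (DepEdge π T m₂) B Bs := by
    rcases hclass B hBπ hBT with h | h
    · exact hconn₁ B hBπ h
    · exact hconn₂ B hBπ h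
  have e2 : Relation.EqvGen (DepEdge π T m₂) B' Bs := by
    rcases hclass B' hB'π hB'T with h | h
    · exact hconn₁ B' hB'π h
    · exact hconn₂ B' hB'π h
  exact Relation.EqvGen.trans _ _ _ e1 (Relation.EqvGen.symm _ _ e2)
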